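/- Let I be a monomial ideal of S = k[x_1,...,x_n] satisfying property N_k. Then for any subset U ⊆ {1,...,n}, the restriction I(U) also satisfies property N_k. -/

import Mathlib

/- # Preliminary definitions

We work in the polynomial ring `S = k[x_1,…,x_n]`, realized as `MvPolynomial (Fin n) kk`.

* Graded pieces of `Tor_i^S(M, k)` are realized via the (graded) Koszul complex
  `M ⊗ Λ•(S^n)`: the degree-`j` strand in homological degree `i` is the complex
  whose `i`-th term is the direct sum over `i`-subsets `T` of the variables of the
  degree `j - i` graded piece of `M`.  `TorNonzero` expresses nonvanishing of the
  homology of this strand, i.e. `Tor_i^S(M, k)_j ≠ 0`.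
* `reg` is the Castelnuovo–Mumford regularity `max { j - i | Tor_i(M,k)_j ≠ 0 }`.
* `SatisfiesN I d p` says the minimal free resolution of `I` is linear for the first
  `p - 1` steps (with generators in degree `d`), i.e. `Tor_i(I,k)_j = 0` unless
  `j = d + i`, for all `i < p`.  `SatisfiesN I d 2` is "linearly presented". -/

open MvPolynomial

/-- The `i`-th term of the Koszul complex on the variables of `k[x_1,…,x_n]`,
with coefficients in the ring itself: a copy of `S` for each `i`-subset of variables. -/
abbrev KModule (kk : Type) [Field kk] (n : ℕ) (i : ℕ) : Type :=
  {T : Finset (Fin n) // T.card = i} → MvPolynomial (Fin n) kk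

/-- The Koszul differential `K_{m+1} → K_m`. -/
noncomputable def Dmap (kk : Type) [Field kk] (n : ℕ) (m : ℕ) :
    KModule kk n (m + 1) →ₗ[kk] KModule kk n m where
  toFun f T := ∑ t ∈ (T.1ᶜ).attach,
    ((-1 : kk) ^ ((T.1.filter (fun s => s < t.1)).card)) •
      (X t.1 * f ⟨insert t.1 T.1, by
        rw [Finset.card_insert_of_notMem (Finset.mem_compl.mp t.2), T.2]⟩)
  map_add' f g := by
    funext T
    simp [mul_add, smul_add, Finset.sum_add_distrib]
  map_smul' c f := by
    funext T
    dsimp only [RingHom.id_apply, Pi.smul_apply]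
    rw [Finset.smul_sum]
    refine Finset.sum_congr rfl fun t _ => ?_
    rw [mul_smul_comm, smul_comm]

/-- The Koszul differential out of homological degree `i` (the zero map for `i = 0`). -/
noncomputable def Dout (kk : Type) [Field kk] (n : ℕ) :
    (i : ℕ) → (KModule kk n i →ₗ[kk] KModule kk n (i - 1))
  | 0 => 0
  | (m + 1) => Dmap kk n m

/-- The degree-`m` graded piece of an ideal `I ⊆ k[x_1,…,x_n]`,
as a `k`-subspace (zero in negative degrees). -/
noncomputable def gradedPiece {kk : Type} [Field kk] {n : ℕ}
    (I : Ideal (MvPolynomial (Fin n) kk)) (m : ℤ) :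
    Submodule kk (MvPolynomial (Fin n) kk) :=
  if m < 0 then ⊥
  else (Submodule.restrictScalars kk I) ⊓ (homogeneousSubmodule (Fin n) kk m.toNat)

/-- The degree-`j` strand of the Koszul complex of `I` in homological degree `i`. -/
noncomputable def koszulStrand {kk : Type} [Field kk] {n : ℕ}
    (I : Ideal (MvPolynomial (Fin n) kk)) (i : ℕ) (j : ℤ) :
    Submodule kk (KModule kk n i) :=
  Submodule.pi Set.univ (fun _ => gradedPiece I (j - i))

/-- `TorNonzero I i j` states that `Tor_i^S(I, k)_j ≠ 0`, computed as the homology of the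
degree-`j` strand of the Koszul complex of `I`. -/
noncomputable def TorNonzero {kk : Type} [Field kk] {n : ℕ}
    (I : Ideal (MvPolynomial (Fin n) kk)) (i : ℕ) (j : ℤ) : Prop :=
  ¬ ((koszulStrand I i j ⊓ LinearMap.ker (Dout kk n i)) ≤
      Submodule.map (Dmap kk n i) (koszulStrand I (i + 1) j))

/-- The Castelnuovo–Mumford regularity of an ideal `I ⊆ k[x_1,…,x_n]`:
`reg I = max { j - i : Tor_i^S(I,k)_j ≠ 0 }`. -/
noncomputable def reg {kk : Type} [Field kk] {n : ℕ}
    (I : Ideal (MvPolynomial (Fin n) kk)) : ℤ :=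
  sSup { r : ℤ | ∃ (i : ℕ) (j : ℤ), TorNonzero I i j ∧ r = j - i }

/-- Property `N_p` for the ideal `I` (with generators in degree `d`): the minimal graded free
resolution of `I` is linear for `p - 1` steps, i.e. `Tor_i^S(I,k)_j = 0` for `i < p`
unless `j = d + i`. -/
noncomputable def SatisfiesN {kk : Type} [Field kk] {n : ℕ}
    (I : Ideal (MvPolynomial (Fin n) kk)) (d : ℕ) (p : ℕ) : Prop :=
  ∀ i : ℕ, i < p → ∀ j : ℤ, TorNonzero I i j → j = (d : ℤ) + i

/-- The squarefree monomial `∏_{i ∈ T} x_i`. -/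
noncomputable def sqMonomial (kk : Type) [Field kk] {n : ℕ} (T : Finset (Fin n)) :
    MvPolynomial (Fin n) kk :=
  ∏ i ∈ T, X i

/-- `I` is a squarefree monomial ideal generated (up to minimality) by squarefree
monomials of degree `d`. -/
def IsSqfreeMonomialIdealGenInDeg {kk : Type} [Field kk] {n : ℕ}
    (I : Ideal (MvPolynomial (Fin n) kk)) (d : ℕ) : Prop :=
  ∃ G : Set (Finset (Fin n)), (∀ T ∈ G, T.card = d) ∧ I = Ideal.span (sqMonomial kk '' G)

/-- `I` is a squarefree monomial ideal. -/
def IsSqfreeMonomialIdeal {kk : Type} [Field kk] {n : ℕ}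
    (I : Ideal (MvPolynomial (Fin n) kk)) : Prop :=
  ∃ G : Set (Finset (Fin n)), I = Ideal.span (sqMonomial kk '' G)

/-- `I` is a monomial ideal. -/
def IsMonomialIdeal {kk : Type} [Field kk] {n : ℕ}
    (I : Ideal (MvPolynomial (Fin n) kk)) : Prop :=
  ∃ A : Set (Fin n →₀ ℕ), I = Ideal.span ((fun a => monomial a (1 : kk)) '' A)

/-- The monomial with exponent vector `a` is a minimal monomial generator of the
monomial ideal `I`: it lies in `I` and no proper monomial divisor of it lies in `I`. -/
def IsMinGen {kk : Type} [Field kk] {n : ℕ}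
    (I : Ideal (MvPolynomial (Fin n) kk)) (a : Fin n →₀ ℕ) : Prop :=
  monomial a (1 : kk) ∈ I ∧ ∀ b : Fin n →₀ ℕ, b ≤ a → monomial b (1 : kk) ∈ I → b = a

/-- The (total) degree of the monomial with exponent vector `a`. -/
def degExp {n : ℕ} (a : Fin n →₀ ℕ) : ℕ := a.sum fun _ e => e

/-- The graph `G_I` on the minimal monomial generators of `I` (encoded by their exponent
vectors), where two distinct generators `u, v` are adjacent iff `deg lcm(u,v) = d + 1`. -/
def genGraph {kk : Type} [Field kk] {n : ℕ}
    (I : Ideal (MvPolynomial (Fin n) kk)) (d : ℕ) : SimpleGraph (Fin n →₀ ℕ) where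
  Adj u v := IsMinGen I u ∧ IsMinGen I v ∧ u ≠ v ∧ degExp (u ⊔ v) = d + 1
  symm := by
    refine ⟨fun u v h => ?_⟩
    refine ⟨h.2.1, h.1, h.2.2.1.symm, ?_⟩
    rw [sup_comm]
    exact h.2.2.2
  loopless := by
    refine ⟨fun u h => ?_⟩
    exact h.2.2.1 rfl

/-- `G_I(u,v)` is connected: the subgraph of `G_I` induced on the minimal generators
dividing `lcm(u,v)` is connected. -/
def GIConnected {kk : Type} [Field kk] {n : ℕ}
    (I : Ideal (MvPolynomial (Fin n) kk)) (d : ℕ) (u v : Fin n →₀ ℕ) : Prop :=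
  ((genGraph I d).induce {w : Fin n →₀ ℕ | IsMinGen I w ∧ w ≤ u ⊔ v}).Connected

/-- The restriction `I(U)` of a monomial ideal to a subset `U` of the variables:
the ideal generated by the minimal monomial generators supported in `U`. -/
noncomputable def restrictIdeal {kk : Type} [Field kk] {n : ℕ}
    (I : Ideal (MvPolynomial (Fin n) kk)) (U : Set (Fin n)) :
    Ideal (MvPolynomial (Fin n) kk) :=
  Ideal.span { p | ∃ a : Fin n →₀ ℕ, IsMinGen I a ∧ (↑a.support : Set (Fin n)) ⊆ U ∧
    p = monomial a (1 : kk) }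

/-- `I_f`: the ideal generated by the minimal monomial generators of `I` divisible by the
monomial with exponent vector `c`. -/
noncomputable def subIdeal {kk : Type} [Field kk] {n : ℕ}
    (I : Ideal (MvPolynomial (Fin n) kk)) (c : Fin n →₀ ℕ) :
    Ideal (MvPolynomial (Fin n) kk) :=
  Ideal.span { p | ∃ a : Fin n →₀ ℕ, IsMinGen I a ∧ c ≤ a ∧ p = monomial a (1 : kk) }

/-- `Ī_f`: the ideal generated by `g / f` as `g` ranges over the minimal monomial
generators of `I` divisible by the monomial `f` with exponent vector `c`. -/
noncomputable def barIdeal {kk : Type} [Field kk] {n : ℕ}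
    (I : Ideal (MvPolynomial (Fin n) kk)) (c : Fin n →₀ ℕ) :
    Ideal (MvPolynomial (Fin n) kk) :=
  Ideal.span { p | ∃ a : Fin n →₀ ℕ, IsMinGen I a ∧ c ≤ a ∧ p = monomial (a - c) (1 : kk) }

/-- `J_{[d]}`: the squarefree monomial ideal generated by all squarefree monomials of
degree `d` lying in `J`. -/
noncomputable def sqfreePart {kk : Type} [Field kk] {n : ℕ}
    (J : Ideal (MvPolynomial (Fin n) kk)) (d : ℕ) :
    Ideal (MvPolynomial (Fin n) kk) :=
  Ideal.span { p | ∃ T : Finset (Fin n), T.card = d ∧ sqMonomial kk T ∈ J ∧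
    p = sqMonomial kk T }

/-- The Alexander dual `I^∨` of a squarefree monomial ideal `I`: the Stanley–Reisner ideal
of the Alexander dual complex, generated by the squarefree monomials `x_T` such that
`x_{Tᶜ} ∉ I`. -/
noncomputable def alexDual {kk : Type} [Field kk] {n : ℕ}
    (I : Ideal (MvPolynomial (Fin n) kk)) : Ideal (MvPolynomial (Fin n) kk) :=
  Ideal.span { p | ∃ T : Finset (Fin n), sqMonomial kk (Tᶜ) ∉ I ∧ p = sqMonomial kk T }

/- ## Part 2: projective dimension of `S/I`, cohomological dimension, depth, `S_2`, height -/

/-- The `i`-th term of the Koszul complex with coefficients in `S ⧸ I`. -/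
abbrev QModule (kk : Type) [Field kk] (n : ℕ) (I : Ideal (MvPolynomial (Fin n) kk))
    (i : ℕ) : Type :=
  {T : Finset (Fin n) // T.card = i} → (MvPolynomial (Fin n) kk ⧸ I)

/-- The Koszul differential on `S ⧸ I` coefficients. -/
noncomputable def DmapQ (kk : Type) [Field kk] (n : ℕ)
    (I : Ideal (MvPolynomial (Fin n) kk)) (m : ℕ) :
    QModule kk n I (m + 1) →ₗ[kk] QModule kk n I m where
  toFun f T := ∑ t ∈ (T.1ᶜ).attach,
    ((-1 : kk) ^ ((T.1.filter (fun s => s < t.1)).card)) •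
      (Ideal.Quotient.mk I (X t.1) * f ⟨insert t.1 T.1, by
        rw [Finset.card_insert_of_notMem (Finset.mem_compl.mp t.2), T.2]⟩)
  map_add' f g := by
    funext T
    simp [mul_add, smul_add, Finset.sum_add_distrib]
  map_smul' c f := by
    funext T
    dsimp only [RingHom.id_apply, Pi.smul_apply]
    rw [Finset.smul_sum]
    refine Finset.sum_congr rfl fun t _ => ?_
    rw [mul_smul_comm, smul_comm]

/-- The Koszul differential on `S ⧸ I` out of homological degree `i`. -/
noncomputable def DoutQ (kk : Type) [Field kk] (n : ℕ)
    (I : Ideal (MvPolynomial (Fin n) kk)) :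
    (i : ℕ) → (QModule kk n I i →ₗ[kk] QModule kk n I (i - 1))
  | 0 => 0
  | (m + 1) => DmapQ kk n I m

/-- The degree-`m` graded piece of `S ⧸ I` (zero in negative degrees). -/
noncomputable def gradedPieceQ {kk : Type} [Field kk] {n : ℕ}
    (I : Ideal (MvPolynomial (Fin n) kk)) (m : ℤ) :
    Submodule kk (MvPolynomial (Fin n) kk ⧸ I) :=
  if m < 0 then ⊥
  else (homogeneousSubmodule (Fin n) kk m.toNat).map (Ideal.Quotient.mkₐ kk I).toLinearMap

/-- The degree-`j` strand of the Koszul complex of `S ⧸ I` in homological degree `i`. -/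
noncomputable def koszulStrandQ {kk : Type} [Field kk] {n : ℕ}
    (I : Ideal (MvPolynomial (Fin n) kk)) (i : ℕ) (j : ℤ) :
    Submodule kk (QModule kk n I i) :=
  Submodule.pi Set.univ (fun _ => gradedPieceQ I (j - i))

/-- `TorNonzeroQ I i j` states that `Tor_i^S(S/I, k)_j ≠ 0`. -/
noncomputable def TorNonzeroQ {kk : Type} [Field kk] {n : ℕ}
    (I : Ideal (MvPolynomial (Fin n) kk)) (i : ℕ) (j : ℤ) : Prop :=
  ¬ ((koszulStrandQ I i j ⊓ LinearMap.ker (DoutQ kk n I i)) ≤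
      Submodule.map (DmapQ kk n I i) (koszulStrandQ I (i + 1) j))

/-- The projective dimension of `S ⧸ I` over `S = k[x_1,…,x_n]`, via the characterization
`pd(S/I) = max { i : Tor_i^S(S/I, k) ≠ 0 }` by minimal graded free resolutions. -/
noncomputable def projdimQuot {kk : Type} [Field kk] {n : ℕ}
    (I : Ideal (MvPolynomial (Fin n) kk)) : ℕ :=
  sSup { i : ℕ | ∃ j : ℤ, TorNonzeroQ I i j }

/-- The cohomological dimension `cd(R, J)`: the supremum of the `i` such that the local
cohomology `H_J^i(M)` is nonzero for some `R`-module `M`. -/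
noncomputable def cohomologicalDimension (R : Type) [CommRing R] (J : Ideal R) : ℕ :=
  sSup { i : ℕ | ∃ M : ModuleCat R, Nontrivial ((localCohomology J i).obj M) }

/-- `depthGE R J t` : the ideal `J` contains a regular sequence on `R` of length `t`,
i.e. `depth(J, R) ≥ t`. -/
def depthGE (R : Type) [CommRing R] (J : Ideal R) (t : ℕ) : Prop :=
  ∃ rs : List R, rs.length = t ∧ (∀ r ∈ rs, r ∈ J) ∧ RingTheory.Sequence.IsRegular R rs

/-- Serre's condition `(S_2)` for a commutative ring `R`:
`depth R_p ≥ min(2, dim R_p)` for every prime `p`. -/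
def SerreS2 (R : Type) [CommRing R] : Prop :=
  ∀ p : Ideal R, ∀ _ : p.IsPrime,
    ∀ t : ℕ, (t : WithBot ℕ∞) ≤ min 2 (ringKrullDim (Localization.AtPrime p)) →
      depthGE (Localization.AtPrime p)
        (IsLocalRing.maximalIdeal (Localization.AtPrime p)) t

/-- The height of an ideal: the infimum of the heights of the primes containing it. -/
noncomputable def idealHeight {R : Type} [CommRing R] (I : Ideal R) : ℕ∞ :=
  ⨅ p : { p : PrimeSpectrum R // I ≤ p.asIdeal }, Order.height p.1

/-- The numerical function `f(n,d)` of the paper: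
`f(n,d) = 0` if `n < d`, `f(d,d) = d`, and `f(n,d) = ⌊(d-1)n/(d+1)⌋ + 1` for `n > d`. -/
def fval (n d : ℕ) : ℕ :=
  if n < d then 0 else if n = d then d else (d - 1) * n / (d + 1) + 1

/-- The numerical function `g(n,d) = n - ⌊n/(d+1)⌋ - ⌊(n-1)/(d+1)⌋` of the paper. -/
def gval (n d : ℕ) : ℕ := n - n / (d + 1) - (n - 1) / (d + 1)

/-- `I` is a homogeneous ideal: it is stable under taking homogeneous components. -/
def IsHomog {kk : Type} [Field kk] {n : ℕ} (I : Ideal (MvPolynomial (Fin n) kk)) : Prop :=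
  ∀ p ∈ I, ∀ i : ℕ, homogeneousComponent i p ∈ I


namespace RestrictionAux
open MvPolynomial Finsupp
variable {kk : Type} [Field kk] {n : ℕ}

lemma degExp_eq (a : Fin n →₀ ℕ) : degExp a = ∑ i, a i :=
  Finsupp.sum_fintype _ _ (fun _ => rfl)

lemma monomial_mem_span_iff {A : Set (Fin n →₀ ℕ)} {m : Fin n →₀ ℕ} :
    monomial m (1:kk) ∈ Ideal.span ((fun a => monomial a (1:kk)) '' A) ↔ ∃ a ∈ A, a ≤ m := by
  rw [MvPolynomial.mem_ideal_span_monomial_image]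
  simp [MvPolynomial.support_monomial]

lemma exists_minGen {I : Ideal (MvPolynomial (Fin n) kk)} {m : Fin n →₀ ℕ}
    (hm : monomial m (1:kk) ∈ I) : ∃ c, IsMinGen I c ∧ c ≤ m := by
  classical
  generalize hd : degExp m = D
  induction D using Nat.strong_induction_on generalizing m with
  | _ D ih =>
    by_cases hmin : IsMinGen I m
    · exact ⟨m, hmin, le_refl m⟩
    · rw [IsMinGen] at hmin
      push_neg at hmin
      obtain ⟨b, hb1, hb2, hb3⟩ := hmin hm
      have hlt : degExp b < degExp m := by
        rw [degExp_eq, degExp_eq]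
        obtain ⟨i, hi⟩ : ∃ i, b i < m i := by
          by_contra hcon
          push_neg at hcon
          exact hb3 (le_antisymm hb1 (Finsupp.le_def.mpr hcon))
        exact Finset.sum_lt_sum (fun i _ => Finsupp.le_def.mp hb1 i)
          ⟨i, Finset.mem_univ i, hi⟩
      obtain ⟨c, hc, hcb⟩ := ih (degExp b) (hd ▸ hlt) hb2 rfl
      exact ⟨c, hc, hcb.trans hb1⟩

lemma restrict_span_eq (I : Ideal (MvPolynomial (Fin n) kk)) (U : Set (Fin n)) :
    restrictIdeal I U =
    Ideal.span ((fun a => monomial a (1:kk)) '' {a | IsMinGen I a ∧ ↑a.support ⊆ U}) := by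
  unfold restrictIdeal
  congr 1
  ext q
  constructor
  · rintro ⟨a, h1, h2, rfl⟩; exact ⟨a, ⟨h1, h2⟩, rfl⟩
  · rintro ⟨a, ⟨h1, h2⟩, rfl⟩; exact ⟨a, h1, h2, rfl⟩

lemma mem_restrict_iff {I : Ideal (MvPolynomial (Fin n) kk)} {U : Set (Fin n)}
    {q : MvPolynomial (Fin n) kk} :
    q ∈ restrictIdeal I U ↔
      ∀ m ∈ q.support, ∃ c, IsMinGen I c ∧ ↑c.support ⊆ U ∧ c ≤ m := by
  rw [restrict_span_eq, MvPolynomial.mem_ideal_span_monomial_image]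
  constructor
  · intro h m hm; obtain ⟨c, ⟨h1, h2⟩, h3⟩ := h m hm; exact ⟨c, h1, h2, h3⟩
  · intro h m hm; obtain ⟨c, h1, h2, h3⟩ := h m hm; exact ⟨c, ⟨h1, h2⟩, h3⟩

lemma restrict_le {I : Ideal (MvPolynomial (Fin n) kk)} {U : Set (Fin n)} :
    restrictIdeal I U ≤ I := by
  rw [restrictIdeal, Ideal.span_le]
  rintro q ⟨a, h1, _, rfl⟩
  exact h1.1

lemma mem_monomialIdeal_iff {I : Ideal (MvPolynomial (Fin n) kk)} (hmon : IsMonomialIdeal I)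
    {q : MvPolynomial (Fin n) kk} :
    q ∈ I ↔ ∀ m ∈ q.support, ∃ c, IsMinGen I c ∧ c ≤ m := by
  obtain ⟨A, hA⟩ := hmon
  constructor
  · intro h m hm
    rw [hA, MvPolynomial.mem_ideal_span_monomial_image] at h
    obtain ⟨a, ha, hle⟩ := h m hm
    exact exists_minGen (hA ▸ monomial_mem_span_iff.mpr ⟨a, ha, hle⟩ : monomial m (1:kk) ∈ I)
      |>.imp fun c ⟨hc, _⟩ => ⟨hc, ‹_›⟩
  · intro h
    rw [hA, MvPolynomial.mem_ideal_span_monomial_image]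
    intro m hm
    obtain ⟨c, hc, hle⟩ := h m hm
    have := hc.1
    rw [hA] at this
    obtain ⟨a, ha, h2⟩ := monomial_mem_span_iff.mp this
    exact ⟨a, ha, h2.trans hle⟩


lemma isMinGen_restrict_iff {I : Ideal (MvPolynomial (Fin n) kk)} {U : Set (Fin n)}
    {a : Fin n →₀ ℕ} :
    IsMinGen (restrictIdeal I U) a ↔ IsMinGen I a ∧ ↑a.support ⊆ U := by
  classical
  constructor
  · intro h
    have hmem := h.1
    rw [mem_restrict_iff] at hmem
    obtain ⟨c, hc, hcU, hca⟩ := hmem a (by simp [MvPolynomial.support_monomial])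
    have hcJ : monomial c (1:kk) ∈ restrictIdeal I U := by
      rw [mem_restrict_iff]
      intro m hm
      rw [MvPolynomial.support_monomial] at hm
      simp at hm
      exact ⟨c, hc, hcU, hm ▸ le_refl c⟩
    have := h.2 c hca hcJ
    subst this
    exact ⟨hc, hcU⟩
  · rintro ⟨h1, h2⟩
    constructor
    · rw [mem_restrict_iff]
      intro m hm
      rw [MvPolynomial.support_monomial] at hm
      simp at hm
      exact ⟨a, h1, h2, hm ▸ le_refl a⟩
    · intro b hb hbJ
      exact h1.2 b hb (restrict_le hbJ)

lemma restrict_restrict (I : Ideal (MvPolynomial (Fin n) kk)) (U V : Set (Fin n)) :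
    restrictIdeal (restrictIdeal I U) V = restrictIdeal I (U ∩ V) := by
  rw [restrict_span_eq (restrictIdeal I U) V, restrict_span_eq I (U ∩ V)]
  congr 2
  ext a
  simp only [Set.mem_setOf_eq, isMinGen_restrict_iff, Set.subset_inter_iff, and_assoc]

lemma restrict_univ {I : Ideal (MvPolynomial (Fin n) kk)} (hmon : IsMonomialIdeal I) :
    restrictIdeal I Set.univ = I := by
  ext q
  rw [mem_restrict_iff, mem_monomialIdeal_iff hmon]
  simp

lemma isMonomialIdeal_restrict (I : Ideal (MvPolynomial (Fin n) kk)) (U : Set (Fin n)) :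
    IsMonomialIdeal (restrictIdeal I U) :=
  ⟨_, restrict_span_eq I U⟩


/-- The algebra map killing the variable `t₀`. -/
noncomputable def pz (t₀ : Fin n) : MvPolynomial (Fin n) kk →ₐ[kk] MvPolynomial (Fin n) kk :=
  aeval (fun t => if t = t₀ then 0 else X t)

lemma coeff_pz (t₀ : Fin n) (a : Fin n →₀ ℕ) (q : MvPolynomial (Fin n) kk) :
    coeff a (pz t₀ q) = if a t₀ = 0 then coeff a q else 0 := by
  classical
  induction q using MvPolynomial.induction_on' with
  | add q r hq hr =>
    rw [map_add, coeff_add, coeff_add, hq, hr]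
    split <;> simp
  | monomial b c =>
    rw [pz, aeval_monomial]
    by_cases hb : b t₀ = 0
    · have : (b.prod fun t e => (if t = t₀ then 0 else X t : MvPolynomial (Fin n) kk) ^ e)
          = b.prod fun t e => (X t) ^ e := by
        apply Finset.prod_congr rfl
        intro t ht
        have : t ≠ t₀ := fun h => by
          subst h; exact (Finsupp.mem_support_iff.mp ht) hb
        simp [this]
      rw [this, MvPolynomial.algebraMap_eq, ← MvPolynomial.monomial_eq]
      by_cases hab : a t₀ = 0
      · simp [hab]
      · rw [if_neg hab, coeff_monomial, if_neg]
        intro h; subst h; exact hab hb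
    · have : (b.prod fun t e => (if t = t₀ then 0 else X t : MvPolynomial (Fin n) kk) ^ e) = 0 := by
        apply Finset.prod_eq_zero (Finsupp.mem_support_iff.mpr hb)
        simp [zero_pow hb]
      rw [this, mul_zero, coeff_zero]
      split
      · rw [coeff_monomial, if_neg]
        intro h; subst h; omega
      · rfl

lemma pz_pz (t₀ : Fin n) (q : MvPolynomial (Fin n) kk) : pz t₀ (pz t₀ q) = pz t₀ q := by
  ext a
  rw [coeff_pz, coeff_pz]
  split <;> simp

/-- Division of the `x t₀`-divisible part by `x t₀`. -/
noncomputable def dv (t₀ : Fin n) (q : MvPolynomial (Fin n) kk) : MvPolynomial (Fin n) kk :=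
  ∑ a ∈ q.support, if a t₀ = 0 then 0 else monomial (a - Finsupp.single t₀ 1) (coeff a q)

lemma coeff_dv (t₀ : Fin n) (a : Fin n →₀ ℕ) (q : MvPolynomial (Fin n) kk) :
    coeff a (dv t₀ q) = coeff (a + Finsupp.single t₀ 1) q := by
  classical
  rw [dv, MvPolynomial.coeff_sum]
  rw [Finset.sum_eq_single (a + Finsupp.single t₀ 1)]
  · rw [if_neg (by simp), add_tsub_cancel_right, coeff_monomial, if_pos rfl]
  · intro b _ hb
    split
    · exact coeff_zero a
    · rw [coeff_monomial, if_neg]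
      intro h
      apply hb
      rw [← h, tsub_add_cancel_of_le]
      rw [Finsupp.single_le_iff]
      omega
  · intro h
    rw [MvPolynomial.notMem_support_iff] at h
    rw [if_neg (by simp), h, coeff_monomial]
    split <;> rfl

lemma dv_sum (t₀ : Fin n) {α : Type*} (s : Finset α) (f : α → MvPolynomial (Fin n) kk) :
    dv t₀ (∑ x ∈ s, f x) = ∑ x ∈ s, dv t₀ (f x) := by
  ext a
  rw [coeff_dv, MvPolynomial.coeff_sum, MvPolynomial.coeff_sum]
  exact Finset.sum_congr rfl fun x _ => (coeff_dv t₀ a (f x)).symm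

lemma dv_smul (t₀ : Fin n) (c : kk) (q : MvPolynomial (Fin n) kk) :
    dv t₀ (c • q) = c • dv t₀ q := by
  ext a
  rw [coeff_dv, coeff_smul, coeff_smul, coeff_dv]

lemma dv_zero (t₀ : Fin n) : dv t₀ (0 : MvPolynomial (Fin n) kk) = 0 := by
  ext a
  rw [coeff_dv, coeff_zero, coeff_zero]

lemma dv_X_mul (t₀ : Fin n) {t : Fin n} (ht : t ≠ t₀) (q : MvPolynomial (Fin n) kk) :
    dv t₀ (X t * q) = X t * dv t₀ q := by
  classical
  ext a
  rw [coeff_dv, coeff_X_mul', coeff_X_mul']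
  have hmem : t ∈ (a + Finsupp.single t₀ 1).support ↔ t ∈ a.support := by
    simp only [Finsupp.mem_support_iff, Finsupp.add_apply, Finsupp.single_apply,
      if_neg (fun h => ht h.symm : ¬ t₀ = t), add_zero]
  by_cases h : t ∈ a.support
  · rw [if_pos (hmem.mpr h), if_pos h, coeff_dv]
    congr 1
    ext u
    simp only [Finsupp.add_apply, Finsupp.tsub_apply, Finsupp.single_apply]
    split_ifs <;> omega
  · rw [if_neg (fun hc => h (hmem.mp hc)), if_neg h]

lemma dv_X_self_mul (t₀ : Fin n) (q : MvPolynomial (Fin n) kk) :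
    dv t₀ (X t₀ * q) = q := by
  classical
  ext a
  rw [coeff_dv, coeff_X_mul', if_pos (by simp), add_tsub_cancel_right]

lemma X_mul_dv_add_pz (t₀ : Fin n) (q : MvPolynomial (Fin n) kk) :
    X t₀ * dv t₀ q + pz t₀ q = q := by
  classical
  ext a
  rw [coeff_add, coeff_X_mul', coeff_pz]
  by_cases h : a t₀ = 0
  · rw [if_neg (by simp [Finsupp.mem_support_iff, h]), if_pos h, zero_add]
  · rw [if_pos (by simp [Finsupp.mem_support_iff, h]), if_neg h, add_zero, coeff_dv,
      tsub_add_cancel_of_le (by rw [Finsupp.single_le_iff]; omega)]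


lemma support_pz_subset (t₀ : Fin n) (q : MvPolynomial (Fin n) kk) :
    (pz t₀ q).support ⊆ q.support := by
  intro m hm
  rw [MvPolynomial.mem_support_iff] at hm ⊢
  rw [coeff_pz] at hm
  intro h; apply hm; rw [h]; split <;> rfl

lemma pz_apply_t₀_eq_zero {t₀ : Fin n} {q : MvPolynomial (Fin n) kk} {m : Fin n →₀ ℕ}
    (hm : m ∈ (pz t₀ q).support) : m t₀ = 0 := by
  rw [MvPolynomial.mem_support_iff, coeff_pz] at hm
  by_contra h
  exact hm (if_neg h)

/-- `pz` maps a monomial ideal `I` into its restriction away from `t₀`. -/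
lemma pz_mem_restrict {I : Ideal (MvPolynomial (Fin n) kk)} (hmon : IsMonomialIdeal I)
    (t₀ : Fin n) {q : MvPolynomial (Fin n) kk} (hq : q ∈ I) :
    pz t₀ q ∈ restrictIdeal I {t | t ≠ t₀} := by
  rw [mem_restrict_iff]
  intro m hm
  obtain ⟨c, hc, hcm⟩ := (mem_monomialIdeal_iff hmon).mp hq m (support_pz_subset t₀ q hm)
  refine ⟨c, hc, ?_, hcm⟩
  intro t ht
  simp only [Finset.coe_sort_coe, Set.mem_setOf_eq]
  rintro rfl
  have h0 := pz_apply_t₀_eq_zero hm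
  have := Finsupp.le_def.mp hcm t
  rw [h0] at this
  exact (Finsupp.mem_support_iff.mp (by exact_mod_cast ht)) (Nat.le_zero.mp this)

/-- `dv` maps the restricted ideal into itself. -/
lemma dv_mem_restrict {I : Ideal (MvPolynomial (Fin n) kk)}
    (t₀ : Fin n) {q : MvPolynomial (Fin n) kk} (hq : q ∈ restrictIdeal I {t | t ≠ t₀}) :
    dv t₀ q ∈ restrictIdeal I {t | t ≠ t₀} := by
  rw [mem_restrict_iff] at hq ⊢
  intro m hm
  rw [MvPolynomial.mem_support_iff, coeff_dv] at hm
  obtain ⟨c, hc, hcU, hcm⟩ := hq _ (MvPolynomial.mem_support_iff.mpr hm)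
  refine ⟨c, hc, hcU, ?_⟩
  rw [Finsupp.le_def]
  intro t
  have := Finsupp.le_def.mp hcm t
  rcases eq_or_ne t t₀ with rfl | hne
  · have ht : c t = 0 := by
      by_contra h
      exact hcU (Finsupp.mem_support_iff.mpr h) rfl
    omega
  · rw [Finsupp.add_apply, Finsupp.single_apply, if_neg (fun h => hne h.symm), add_zero] at this
    exact this

lemma pz_isHomogeneous {t₀ : Fin n} {q : MvPolynomial (Fin n) kk} {m : ℕ}
    (hq : q.IsHomogeneous m) : (pz t₀ q).IsHomogeneous m := by
  intro d hd
  rw [coeff_pz] at hd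
  apply hq
  intro h; apply hd; rw [h]; split <;> rfl

lemma dv_isHomogeneous {t₀ : Fin n} {q : MvPolynomial (Fin n) kk} {m : ℕ}
    (hq : q.IsHomogeneous (m + 1)) : (dv t₀ q).IsHomogeneous m := by
  intro d hd
  rw [coeff_dv] at hd
  have := hq hd
  rw [map_add] at this
  have hs : (Finsupp.weight 1) (Finsupp.single t₀ 1) = 1 := by
    rw [Finsupp.weight_apply, Finsupp.sum_single_index] <;> simp
  omega

lemma dv_of_isHomogeneous_zero {t₀ : Fin n} {q : MvPolynomial (Fin n) kk}
    (hq : q.IsHomogeneous 0) : dv t₀ q = 0 := by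
  ext d
  rw [coeff_dv, coeff_zero]
  by_contra h
  have := hq h
  rw [map_add] at this
  have hs : (Finsupp.weight 1) (Finsupp.single t₀ 1) = 1 := by
    rw [Finsupp.weight_apply, Finsupp.sum_single_index] <;> simp
  omega


lemma gradedPiece_mono {I J : Ideal (MvPolynomial (Fin n) kk)} (hIJ : I ≤ J) (m : ℤ) :
    gradedPiece I m ≤ gradedPiece J m := by
  unfold gradedPiece
  split
  · exact le_refl _
  · exact inf_le_inf_right _ (fun x hx => hIJ hx)

lemma pz_gradedPiece {I : Ideal (MvPolynomial (Fin n) kk)} (hmon : IsMonomialIdeal I)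
    (t₀ : Fin n) (m : ℤ) {q : MvPolynomial (Fin n) kk} (hq : q ∈ gradedPiece I m) :
    pz t₀ q ∈ gradedPiece (restrictIdeal I {t | t ≠ t₀}) m := by
  unfold gradedPiece at hq ⊢
  split
  · rw [Submodule.mem_bot] at *
    split at hq
    · rw [hq]; exact map_zero _
    · omega
  · split at hq
    · omega
    · obtain ⟨h1, h2⟩ := hq
      exact ⟨pz_mem_restrict hmon t₀ h1, pz_isHomogeneous h2⟩

lemma dv_gradedPiece {I : Ideal (MvPolynomial (Fin n) kk)}
    (t₀ : Fin n) (m : ℤ) {q : MvPolynomial (Fin n) kk}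
    (hq : q ∈ gradedPiece (restrictIdeal I {t | t ≠ t₀}) m) :
    dv t₀ q ∈ gradedPiece (restrictIdeal I {t | t ≠ t₀}) (m - 1) := by
  unfold gradedPiece at hq ⊢
  split at hq
  · rw [Submodule.mem_bot] at hq
    rw [hq, dv_zero]
    split
    · exact Submodule.zero_mem _
    · exact Submodule.zero_mem _
  · obtain ⟨h1, h2⟩ := hq
    replace h2 : q.IsHomogeneous m.toNat := h2
    rename_i hm
    push_neg at hm
    rcases eq_or_lt_of_le hm with heq | hlt
    · have hm0 : m.toNat = 0 := by omega
      rw [hm0] at h2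
      rw [dv_of_isHomogeneous_zero h2]
      split
      · exact Submodule.zero_mem _
      · exact Submodule.zero_mem _
    · rw [if_neg (by omega)]
      refine ⟨dv_mem_restrict t₀ h1, ?_⟩
      have : m.toNat = (m-1).toNat + 1 := by omega
      rw [this] at h2
      exact dv_isHomogeneous h2


lemma Dmap_apply (m : ℕ) (f : KModule kk n (m + 1)) (T : {T : Finset (Fin n) // T.card = m}) :
    Dmap kk n m f T = ∑ t ∈ (T.1ᶜ).attach,
      ((-1 : kk) ^ ((T.1.filter (fun s => s < t.1)).card)) •
        (X t.1 * f ⟨insert t.1 T.1, by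
          rw [Finset.card_insert_of_notMem (Finset.mem_compl.mp t.2), T.2]⟩) := rfl

/-- The projection killing `t₀` on the Koszul complex. -/
noncomputable def pimap (t₀ : Fin n) (i : ℕ) (g : KModule kk n i) : KModule kk n i :=
  fun T => if t₀ ∈ T.1 then 0 else pz t₀ (g T)

/-- The contracting homotopy in direction `t₀`. -/
noncomputable def hmap (t₀ : Fin n) (i : ℕ) (g : KModule kk n i) : KModule kk n (i + 1) :=
  fun T => if h : t₀ ∈ T.1 then
    ((-1 : kk) ^ ((T.1.filter (fun s => s < t₀)).card)) •
      dv t₀ (g ⟨T.1.erase t₀, by rw [Finset.card_erase_of_mem h, T.2]; rfl⟩)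
  else 0

lemma pimap_zero (t₀ : Fin n) (i : ℕ) : pimap t₀ i (0 : KModule kk n i) = 0 := by
  funext T
  simp only [pimap, Pi.zero_apply, map_zero, ite_self]

lemma pimap_sub (t₀ : Fin n) (i : ℕ) (g h : KModule kk n i) :
    pimap t₀ i (g - h) = pimap t₀ i g - pimap t₀ i h := by
  funext T
  simp only [pimap, Pi.sub_apply, map_sub]
  split <;> simp

lemma pimap_idem (t₀ : Fin n) (i : ℕ) (g : KModule kk n i) :
    pimap t₀ i (pimap t₀ i g) = pimap t₀ i g := by
  funext T
  simp only [pimap]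
  split
  · rfl
  · exact pz_pz t₀ (g T)

/-- `pimap` is a chain map. -/
lemma Dmap_pimap (t₀ : Fin n) (m : ℕ) (g : KModule kk n (m + 1)) :
    Dmap kk n m (pimap t₀ (m + 1) g) = pimap t₀ m (Dmap kk n m g) := by
  classical
  funext T
  rw [Dmap_apply]
  show _ = pimap t₀ m (Dmap kk n m g) T
  rw [pimap]
  by_cases ht₀ : t₀ ∈ T.1
  · rw [if_pos ht₀]
    apply Finset.sum_eq_zero
    intro t _
    have : t₀ ∈ insert t.1 T.1 := Finset.mem_insert_of_mem ht₀
    simp only [pimap, if_pos this, mul_zero, smul_zero]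
  · rw [if_neg ht₀, Dmap_apply, map_sum]
    apply Finset.sum_congr rfl
    intro t _
    rw [map_smul, map_mul]
    have hXt : pz t₀ (X t.1 : MvPolynomial (Fin n) kk) = if t.1 = t₀ then 0 else X t.1 := by
      rw [pz, aeval_X]
    by_cases ht : t.1 = t₀
    · have : t₀ ∈ insert t.1 T.1 := by rw [ht]; exact Finset.mem_insert_self _ _
      simp only [pimap, if_pos this, hXt, if_pos ht, mul_zero, smul_zero, zero_mul]
    · have : t₀ ∉ insert t.1 T.1 := by
        rw [Finset.mem_insert]
        rintro (h | h)
        · exact ht h.symm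
        · exact ht₀ h
      simp only [pimap, if_neg this, hXt, if_neg ht]


lemma dv_neg (t₀ : Fin n) (q : MvPolynomial (Fin n) kk) : dv t₀ (-q) = - dv t₀ q := by
  ext a
  rw [coeff_dv, coeff_neg, coeff_neg, coeff_dv]

lemma neg_one_pow_congr {a b : ℕ} (h : a % 2 = b % 2) : ((-1:kk)^a : kk) = (-1:kk)^b := by
  rcases Nat.even_or_odd a with ha | ha
  · have hb : Even b := by
      rw [Nat.even_iff] at ha ⊢
      omega
    rw [Even.neg_one_pow ha, Even.neg_one_pow hb]
  · have hb : Odd b := by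
      rw [Nat.odd_iff] at ha ⊢
      omega
    rw [Odd.neg_one_pow ha, Odd.neg_one_pow hb]

lemma dv_add (t₀ : Fin n) (q r : MvPolynomial (Fin n) kk) :
    dv t₀ (q + r) = dv t₀ q + dv t₀ r := by
  ext a
  rw [coeff_dv, coeff_add, coeff_add, coeff_dv, coeff_dv]

lemma homotopy (t₀ : Fin n) (i : ℕ) (g : KModule kk n i) (hg : Dout kk n i g = 0) :
    Dmap kk n i (hmap t₀ i g) = g - pimap t₀ i g := by
  classical
  funext T
  rw [Dmap_apply]
  show _ = (g - pimap t₀ i g) T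
  rw [Pi.sub_apply, pimap]
  by_cases ht₀ : t₀ ∈ T.1
  · -- Case B
    rw [if_pos ht₀, sub_zero]
    rcases i with _ | m
    · exact absurd (Finset.card_eq_zero.mp T.2 ▸ ht₀) (Finset.notMem_empty t₀)
    have hg' : Dmap kk n m g = 0 := hg
    set T' : Finset (Fin n) := T.1.erase t₀ with hT'
    have hT'card : T'.card = m := by
      rw [hT', Finset.card_erase_of_mem ht₀, T.2]; rfl
    have hsub : ∀ t, t ∈ (T.1ᶜ) → t ∈ (T'ᶜ) := by
      intro t ht
      rw [Finset.mem_compl] at ht ⊢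
      intro hc
      exact ht (Finset.mem_of_mem_erase hc)
    -- the common summand
    set E : Fin n → MvPolynomial (Fin n) kk := fun t =>
      if h : t ∈ (T'ᶜ) then
        ((-1 : kk) ^ ((T'.filter (fun s => s < t)).card)) •
          (X t * g ⟨insert t T', by
            rw [Finset.card_insert_of_notMem (Finset.mem_compl.mp h), hT'card]⟩)
      else 0 with hE
    -- the Koszul relation in homological degree m at T'
    have hrel : ∑ t ∈ (T'ᶜ), E t = 0 := by
      have := congrFun hg' ⟨T', hT'card⟩
      rw [Dmap_apply] at this
      rw [← Finset.sum_attach (T'ᶜ) E]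
      rw [Pi.zero_apply] at this
      rw [← this]
      apply Finset.sum_congr rfl
      intro t _
      simp only [hE]
      rw [dif_pos t.2]
    have hTc : (T'ᶜ).erase t₀ = T.1ᶜ := by
      ext u
      simp only [Finset.mem_erase, Finset.mem_compl, hT', Finset.mem_erase]
      constructor
      · rintro ⟨h1, h2⟩ hc
        exact h2 ⟨h1, hc⟩
      · intro h
        refine ⟨fun hc => h (hc ▸ ht₀), fun hc => h hc.2⟩
    have ht₀c : t₀ ∈ T'ᶜ := Finset.mem_compl.mpr (Finset.notMem_erase t₀ T.1)
    have hsplit : E t₀ + ∑ t ∈ T.1ᶜ, E t = 0 := by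
      rw [← hTc, Finset.add_sum_erase _ E ht₀c, hrel]
    have hEt₀ : E t₀ = ((-1 : kk) ^ ((T'.filter (fun s => s < t₀)).card)) • (X t₀ * g T) := by
      simp only [hE]
      rw [dif_pos ht₀c]
      congr 2
      have : insert t₀ T' = T.1 := Finset.insert_erase ht₀
      exact congrArg g (Subtype.ext this)
    -- divide the relation by x t₀
    set e₀ : ℕ := (T'.filter (fun s => s < t₀)).card with he₀
    rw [hEt₀] at hsplit
    have hdvrel : ((-1 : kk) ^ e₀) • g T + ∑ t ∈ T.1ᶜ, dv t₀ (E t) = 0 := by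
      have h := congrArg (dv t₀) hsplit
      rw [dv_zero, dv_add, dv_sum, dv_smul, dv_X_self_mul] at h
      exact h
    have h5 : ((-1 : kk) ^ e₀) • (((-1 : kk) ^ e₀) • g T) = g T := by
      rw [smul_smul, ← pow_add, Even.neg_one_pow ⟨_, rfl⟩, one_smul]
    have h6 : ((-1 : kk) ^ e₀) • g T = - ∑ t ∈ T.1ᶜ, dv t₀ (E t) :=
      eq_neg_of_add_eq_zero_left hdvrel
    have h7 : g T = ((-1 : kk) ^ e₀) • (- ∑ t ∈ T.1ᶜ, dv t₀ (E t)) := by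
      rw [← h6, h5]
    -- the common form of both sides
    set F : Fin n → MvPolynomial (Fin n) kk := fun t =>
      if h : t ∈ (T'ᶜ) then
        ((-1 : kk) ^ (e₀ + (T'.filter (fun s => s < t)).card + 1)) •
          (X t * dv t₀ (g ⟨insert t T', by
            rw [Finset.card_insert_of_notMem (Finset.mem_compl.mp h), hT'card]⟩))
      else 0 with hF
    have hb : g T = ∑ t ∈ T.1ᶜ, F t := by
      rw [h7, smul_neg, Finset.smul_sum, ← Finset.sum_neg_distrib]
      apply Finset.sum_congr rfl
      intro t ht
      have htc : t ∈ T'ᶜ := hsub t ht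
      have htne : t ≠ t₀ := fun h => (Finset.mem_compl.mp ht) (h ▸ ht₀)
      simp only [hE, hF]
      rw [dif_pos htc, dif_pos htc, dv_smul, dv_X_mul t₀ htne, smul_smul, ← neg_smul,
        ← pow_add]
      congr 1
      rw [pow_add, pow_add, pow_one]
      ring
    have hTins : insert t₀ T' = T.1 := Finset.insert_erase ht₀
    have ht₀notT' : t₀ ∉ T' := Finset.notMem_erase t₀ T.1
    clear_value T'
    rw [hb, ← Finset.sum_attach (T.1ᶜ) F]
    apply Finset.sum_congr rfl
    rintro ⟨t, htmem⟩ _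
    have htc : t ∈ T'ᶜ := hsub t htmem
    have htne : t ≠ t₀ := fun h => (Finset.mem_compl.mp htmem) (h ▸ ht₀)
    have hmemins : t₀ ∈ insert t T.1 := Finset.mem_insert_of_mem ht₀
    have hkey : (insert t T.1).erase t₀ = insert t T' := by
      rw [hT']
      exact Finset.erase_insert_of_ne htne
    show _ = F t
    rw [hmap, dif_pos hmemins]
    have hgc : g ⟨(insert t T.1).erase t₀, by
        rw [Finset.card_erase_of_mem hmemins, Finset.card_insert_of_notMem
          (Finset.mem_compl.mp htmem), T.2]; rfl⟩
        = g ⟨insert t T', by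
        rw [Finset.card_insert_of_notMem (Finset.mem_compl.mp htc), hT'card]⟩ :=
      congrArg g (Subtype.ext hkey)
    rw [hgc, mul_smul_comm, smul_smul, ← pow_add]
    simp only [hF]
    rw [dif_pos htc]
    congr 1
    -- sign bookkeeping
    have hc1 : (T.1.filter (fun s => s < t)).card
        = (T'.filter (fun s => s < t)).card + (if t₀ < t then 1 else 0) := by
      rw [← hTins, Finset.filter_insert]
      split
      · rw [Finset.card_insert_of_notMem (fun hc => ht₀notT' (Finset.mem_filter.mp hc).1)]
      · rw [Nat.add_zero]
    have hc2 : ((insert t T.1).filter (fun s => s < t₀)).card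
        = e₀ + (if t < t₀ then 1 else 0) := by
      rw [Finset.filter_insert]
      have hbase : (T.1.filter (fun s => s < t₀)).card = e₀ := by
        rw [he₀, ← hTins, Finset.filter_insert, if_neg (lt_irrefl t₀)]
      split
      · rw [Finset.card_insert_of_notMem
          (fun hc => (Finset.mem_compl.mp htmem) (Finset.mem_filter.mp hc).1), hbase]
      · rw [hbase, Nat.add_zero]
    rw [hc1, hc2]
    rcases lt_or_gt_of_ne htne with hlt | hgt
    · rw [if_neg (asymm hlt), if_pos hlt]
      apply neg_one_pow_congr
      omega
    · rw [if_pos hgt, if_neg (asymm hgt)]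
      apply neg_one_pow_congr
      omega
  · -- Case A
    rw [if_neg ht₀]
    refine (Finset.sum_eq_single_of_mem (⟨t₀, Finset.mem_compl.mpr ht₀⟩ : {x // x ∈ T.1ᶜ})
      (Finset.mem_attach _ _) ?_).trans ?_
    · intro b _ hb
      have hb1 : b.1 ≠ t₀ := fun h => hb (Subtype.ext h)
      have : t₀ ∉ insert b.1 T.1 := by
        rw [Finset.mem_insert]
        rintro (h | h)
        · exact hb1 h.symm
        · exact ht₀ h
      rw [hmap, dif_neg this, mul_zero, smul_zero]
    · have h1 : t₀ ∈ insert t₀ T.1 := Finset.mem_insert_self _ _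
      rw [hmap, dif_pos h1]
      have h2 : (insert t₀ T.1).erase t₀ = T.1 := Finset.erase_insert ht₀
      have h3 : ((insert t₀ T.1).filter (fun s => s < t₀)) = T.1.filter (fun s => s < t₀) := by
        rw [Finset.filter_insert, if_neg (lt_irrefl t₀)]
      rw [h3]
      have h4 : g ⟨(insert t₀ T.1).erase t₀, by
          rw [Finset.card_erase_of_mem h1, Finset.card_insert_of_notMem ht₀, T.2]; rfl⟩ = g T :=
        congrArg g (Subtype.ext h2)
      rw [h4]
      rw [mul_smul_comm, smul_smul, ← pow_add, Even.neg_one_pow ⟨_, rfl⟩, one_smul]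
      exact eq_sub_of_add_eq (X_mul_dv_add_pz t₀ (g T))

lemma mem_koszulStrand_iff {I : Ideal (MvPolynomial (Fin n) kk)} {i : ℕ} {j : ℤ}
    {z : KModule kk n i} :
    z ∈ koszulStrand I i j ↔ ∀ T, z T ∈ gradedPiece I (j - i) := by
  rw [koszulStrand, Submodule.mem_pi]
  exact ⟨fun h T => h T (Set.mem_univ T), fun h T _ => h T⟩

lemma strand_mono {I J : Ideal (MvPolynomial (Fin n) kk)} (hIJ : I ≤ J) {i : ℕ} {j : ℤ}
    {z : KModule kk n i} (hz : z ∈ koszulStrand I i j) : z ∈ koszulStrand J i j := by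
  rw [mem_koszulStrand_iff] at hz ⊢
  exact fun T => gradedPiece_mono hIJ _ (hz T)

lemma pimap_mem_strand {I : Ideal (MvPolynomial (Fin n) kk)} (hmon : IsMonomialIdeal I)
    (t₀ : Fin n) {i : ℕ} {j : ℤ} {w : KModule kk n i} (hw : w ∈ koszulStrand I i j) :
    pimap t₀ i w ∈ koszulStrand (restrictIdeal I {t | t ≠ t₀}) i j := by
  rw [mem_koszulStrand_iff] at hw ⊢
  intro T
  rw [pimap]
  split
  · exact Submodule.zero_mem _
  · exact pz_gradedPiece hmon t₀ _ (hw T)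

lemma hmap_mem_strand {I : Ideal (MvPolynomial (Fin n) kk)}
    (t₀ : Fin n) {i : ℕ} {j : ℤ} {y : KModule kk n i}
    (hy : y ∈ koszulStrand (restrictIdeal I {t | t ≠ t₀}) i j) :
    hmap t₀ i y ∈ koszulStrand (restrictIdeal I {t | t ≠ t₀}) (i + 1) j := by
  rw [mem_koszulStrand_iff] at hy ⊢
  intro T
  rw [hmap]
  split
  · have hdeg : (j - (↑(i + 1)) : ℤ) = (j - i) - 1 := by push_cast; ring
    rw [hdeg]
    exact Submodule.smul_mem _ _ (dv_gradedPiece t₀ _ (hy _))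
  · exact Submodule.zero_mem _

lemma dout_pimap (t₀ : Fin n) (i : ℕ) (g : KModule kk n i) (hg : Dout kk n i g = 0) :
    Dout kk n i (pimap t₀ i g) = 0 := by
  rcases i with _ | m
  · rfl
  · show Dmap kk n m (pimap t₀ (m + 1) g) = 0
    rw [Dmap_pimap]
    have : Dmap kk n m g = 0 := hg
    rw [this, pimap_zero]

/-- Transfer of Koszul-strand exactness from `I` to its restriction away from `t₀`. -/
lemma transfer {I : Ideal (MvPolynomial (Fin n) kk)} (hmon : IsMonomialIdeal I)
    (t₀ : Fin n) (i : ℕ) (j : ℤ)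
    (hI : koszulStrand I i j ⊓ LinearMap.ker (Dout kk n i) ≤
      Submodule.map (Dmap kk n i) (koszulStrand I (i + 1) j)) :
    koszulStrand (restrictIdeal I {t | t ≠ t₀}) i j ⊓ LinearMap.ker (Dout kk n i) ≤
      Submodule.map (Dmap kk n i) (koszulStrand (restrictIdeal I {t | t ≠ t₀}) (i + 1) j) := by
  intro z hz
  rw [Submodule.mem_inf] at hz
  obtain ⟨hzs, hzk⟩ := hz
  have hzk' : Dout kk n i z = 0 := LinearMap.mem_ker.mp hzk
  have hzI : z ∈ koszulStrand I i j := strand_mono restrict_le hzs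
  obtain ⟨w, hw, hDw⟩ := hI (Submodule.mem_inf.mpr ⟨hzI, hzk⟩)
  set y : KModule kk n i := z - pimap t₀ i z with hy
  have hDouty : Dout kk n i y = 0 := by
    rw [hy, map_sub, hzk', dout_pimap t₀ i z hzk', sub_zero]
  have hpiy : pimap t₀ i y = 0 := by
    rw [hy, pimap_sub, pimap_idem, sub_self]
  have hymem : y ∈ koszulStrand (restrictIdeal I {t | t ≠ t₀}) i j := by
    rw [hy]
    exact Submodule.sub_mem _ hzs
      (strand_mono restrict_le (pimap_mem_strand (isMonomialIdeal_restrict I _) t₀ hzs))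
  refine ⟨pimap t₀ (i + 1) w + hmap t₀ i y, ?_, ?_⟩
  · exact Submodule.add_mem _ (pimap_mem_strand hmon t₀ hw) (hmap_mem_strand t₀ hymem)
  · rw [map_add, Dmap_pimap, hDw, homotopy t₀ i y hDouty, hpiy, sub_zero, hy]
    abel

/-- Restriction away from a single variable preserves property `N_p`. -/
lemma satisfiesN_restrict_single {I : Ideal (MvPolynomial (Fin n) kk)}
    (hmon : IsMonomialIdeal I) {d p : ℕ} (hN : SatisfiesN I d p) (t₀ : Fin n) :
    SatisfiesN (restrictIdeal I {t | t ≠ t₀}) d p := by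
  intro i hi j hT
  refine hN i hi j ?_
  intro hle
  exact hT (transfer hmon t₀ i j hle)

end RestrictionAux
/-- **Lemma 2.2.** If a monomial ideal `I` satisfies property `N_k`, then so does its
restriction `I(U)` to any subset `U` of the variables. -/
theorem restriction_satisfiesN (kk : Type) [Field kk] (n : ℕ)
    (I : Ideal (MvPolynomial (Fin n) kk)) (hmon : IsMonomialIdeal I)
    (d p : ℕ) (hN : SatisfiesN I d p) (U : Set (Fin n)) :
    SatisfiesN (restrictIdeal I U) d p := by
  classical
  open RestrictionAux in
  have main : ∀ (W : Finset (Fin n)) (J : Ideal (MvPolynomial (Fin n) kk)),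
      IsMonomialIdeal J → SatisfiesN J d p → SatisfiesN (restrictIdeal J {t | t ∉ W}) d p := by
    intro W
    induction W using Finset.induction_on with
    | empty =>
      intro J hm hs
      have : {t : Fin n | t ∉ (∅ : Finset (Fin n))} = Set.univ := by
        ext t; simp
      rw [this, restrict_univ hm]
      exact hs
    | insert t₀ W' ht ih =>
      intro J hm hs
      have hset : {t : Fin n | t ∉ insert t₀ W'} = {t : Fin n | t ∉ W'} ∩ {t : Fin n | t ≠ t₀} := by
        ext t
        simp only [Set.mem_setOf_eq, Finset.mem_insert, Set.mem_inter_iff]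
        tauto
      rw [hset, ← restrict_restrict]
      exact satisfiesN_restrict_single (isMonomialIdeal_restrict J _) (ih J hm hs) t₀
  have hU : {t : Fin n | t ∉ Uᶜ.toFinset} = U := by
    ext t
    simp
  have := main Uᶜ.toFinset I hmon hN
  rwa [hU] at this
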